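/- Let u, v be nontrivial elements of F_r. Then limsup_{n → ∞} of (1/|S_n|) · Σ_{γ ∈ S_n, u prefix of γ⁻¹} ⟨π(γ)1_B, 1_{B_v}⟩ / Ξ(γ) is at most μ(B_u) · μ(B_v), where ⟨π(γ)1_B, 1_{B_v}⟩ = ∫_{B_v} P(γ,ξ)^{1/2} dμ(ξ). (Equivalently, limsup_n ⟨M_n(χ_u) 1_{B_v}, 1_B⟩ ≤ μ(B_u)μ(B_v).) -/

import Mathlib

/-!
Setting: the free group `F_r = ⟨a₁,…,a_r⟩` (`r ≥ 2`), its boundary `B` of infinite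
reduced words, the visual measure `μ` on `B`, the Gromov product, the Poisson kernel
`P(γ,ξ) = (2r-1)^(2(γ|ξ)-|γ|)` and the Harish-Chandra function `Ξ`.
-/

open MeasureTheory Filter Topology ComplexConjugate
open scoped ENNReal

namespace ArxivFree

/-- The alphabet `S = {a₁^{±1},…,a_r^{±1}}` of generators and their inverses:
a letter is a generator together with a sign. -/
abbrev Letter (r : ℕ) := Fin r × Bool

/-- The inverse of a letter. -/
def bar {r : ℕ} (x : Letter r) : Letter r := (x.1, !x.2)

/-- The boundary `B`: infinite reduced words over the alphabet, i.e. sequences of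
letters in which no letter is immediately followed by its inverse. -/
abbrev Boundary (r : ℕ) := {ξ : ℕ → Letter r // ∀ i, ξ (i + 1) ≠ bar (ξ i)}

/-- `l` is a (finite) prefix of the infinite word `ξ`. -/
def IsPrefixSeq {r : ℕ} (l : List (Letter r)) (ξ : ℕ → Letter r) : Prop :=
  ∀ i, i < l.length → l[i]? = some (ξ i)

/-- The cylinder `B_u`: infinite reduced words admitting the reduced word of `u`
as a prefix. -/
def cylinder {r : ℕ} (u : FreeGroup (Fin r)) : Set (Boundary r) :=
  {ξ | IsPrefixSeq (FreeGroup.toWord u) ξ.1}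

/-- The Gromov product: the length of the longest common prefix of the finite word `l`
and the infinite word `ξ`. -/
def gromov {r : ℕ} (l : List (Letter r)) (ξ : ℕ → Letter r) : ℕ :=
  Nat.findGreatest (fun k => ∀ i, i < k → l[i]? = some (ξ i)) l.length

/-- The Poisson kernel `P(γ,ξ) = (2r-1)^(2(γ|ξ) - |γ|)`. -/
noncomputable def PK {r : ℕ} (γ : FreeGroup (Fin r)) (ξ : Boundary r) : ℝ :=
  (2 * (r : ℝ) - 1) ^
    (2 * (gromov (FreeGroup.toWord γ) ξ.1 : ℤ) - ((FreeGroup.toWord γ).length : ℤ))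

/-- The sphere `S_n ⊆ F_r` of elements of word length `n`, as a finite set. -/
noncomputable def sphere (r n : ℕ) : Finset (FreeGroup (Fin r)) :=
  (Set.Finite.preimage (Function.Injective.injOn FreeGroup.toWord_injective)
    (List.finite_length_eq (Letter r) n)).toFinset

/-- The Harish-Chandra function `Ξ(γ) = ∫_B P(γ,ξ)^{1/2} dμ(ξ)`. -/
noncomputable def HC {r : ℕ} (μ : Measure (Boundary r)) (γ : FreeGroup (Fin r)) : ℝ :=
  ∫ ξ, Real.sqrt (PK γ ξ) ∂μ



variable {r : ℕ}

@[simp] lemma bar_bar (x : Letter r) : bar (bar x) = x := by simp [bar]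

lemma bar_eq_iff {x y : Letter r} : bar x = y ↔ x = bar y := by
  constructor <;> rintro rfl <;> simp

/-- Reduced lists. -/
def Reduced (l : List (Letter r)) : Prop := List.Chain' (fun a b => b ≠ bar a) l

instance : DecidablePred (@Reduced r) := fun l =>
  inferInstanceAs (Decidable (List.IsChain _ l))

lemma reduce_eq_self_iff (l : List (Letter r)) :
    FreeGroup.reduce l = l ↔ Reduced l := by
  constructor
  · intro h
    induction l with
    | nil => exact List.isChain_nil
    | cons x t ih =>
      rw [FreeGroup.reduce.cons] at h
      rcases ht : FreeGroup.reduce t with _ | ⟨hd, tl⟩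
      · rw [ht] at h
        simp only at h
        rw [← h]
        exact List.isChain_singleton x
      · rw [ht] at h
        simp only at h
        by_cases hc : x.1 = hd.1 ∧ x.2 = !hd.2
        · rw [if_pos hc] at h
          exfalso
          have h1 : (FreeGroup.reduce t).length ≤ t.length := FreeGroup.Red.length_le (FreeGroup.reduce.red)
          rw [ht] at h1
          have e1 : tl.length = t.length + 1 := by rw [h]; simp
          simp only [List.length_cons] at h1
          omega
        · rw [if_neg hc] at h
          have htl : t = hd :: tl := by
            have := congrArg List.tail h
            simpa using this.symm
          have : FreeGroup.reduce t = t := by rw [ht, htl]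
          have hch := ih this
          rw [htl] at hch ⊢
          refine List.isChain_cons_cons.2 ⟨?_, hch⟩
          intro hbar
          apply hc
          rw [hbar]
          simp [bar]
  · intro h
    induction l with
    | nil => rfl
    | cons x t ih =>
      have ht : Reduced t := h.tail
      rw [FreeGroup.reduce.cons, ih ht]
      rcases t with _ | ⟨hd, tl⟩
      · rfl
      · have hx : hd ≠ bar x := (List.isChain_cons_cons.1 h).1
        have hc : ¬(x.1 = hd.1 ∧ x.2 = !hd.2) := by
          intro hc
          apply hx
          have : x = bar hd := by
            obtain ⟨h1, h2⟩ := hc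
            cases x; cases hd; simp [bar] at h1 h2 ⊢; exact ⟨h1, h2⟩
          rw [this, bar_bar]
        simp [hc]

lemma reduced_toWord (x : FreeGroup (Fin r)) : Reduced x.toWord :=
  (reduce_eq_self_iff _).1 (FreeGroup.reduce_toWord x)

lemma toWord_mk_of_reduced {l : List (Letter r)} (h : Reduced l) :
    (FreeGroup.mk l).toWord = l := by
  rw [FreeGroup.toWord_mk, (reduce_eq_self_iff l).2 h]

lemma Reduced.tail' {x : Letter r} {t : List (Letter r)} (h : Reduced (x :: t)) : Reduced t :=
  List.IsChain.tail h

/-- helper: `(∀ y ∈ o, y ≠ a) ↔ o ≠ some a`. -/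
lemma forall_mem_ne_iff {α : Type*} (o : Option α) (a : α) :
    (∀ y ∈ o, y ≠ a) ↔ o ≠ some a := by
  cases o <;> simp

/-- Reduced words of length `k`, as a finset. -/
noncomputable def RW (r k : ℕ) : Finset (List (Letter r)) :=
  ((List.finite_length_eq (Letter r) k).toFinset).filter Reduced

lemma mem_RW {k : ℕ} {l : List (Letter r)} :
    l ∈ RW r k ↔ l.length = k ∧ Reduced l := by
  simp [RW, Set.Finite.mem_toFinset]

/-- Reduced words of length `k` whose first letter is not `c`. -/
noncomputable def Tset (r k : ℕ) (c : Letter r) : Finset (List (Letter r)) :=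
  (RW r k).filter (fun w => w.head? ≠ some c)

lemma mem_Tset {k : ℕ} {c : Letter r} {l : List (Letter r)} :
    l ∈ Tset r k c ↔ l.length = k ∧ Reduced l ∧ l.head? ≠ some c := by
  simp [Tset, mem_RW, and_assoc]

lemma card_letters : Fintype.card (Letter r) = 2 * r := by
  simp [mul_comm]

lemma Tset_card (k : ℕ) (c : Letter r) : (Tset r k c).card = (2 * r - 1) ^ k := by
  induction k generalizing c with
  | zero =>
    have : Tset r 0 c = {[]} := by
      ext l; simp [mem_Tset]
      intro h; subst h; simp [Reduced, List.Chain']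
    simp [this]
  | succ k ih =>
    have hdec : Tset r (k + 1) c =
        (Finset.univ.filter (fun x : Letter r => x ≠ c)).biUnion
          (fun x => (Tset r k (bar x)).image (x :: ·)) := by
      ext w
      simp only [Finset.mem_biUnion, Finset.mem_filter, Finset.mem_univ, true_and,
        Finset.mem_image, mem_Tset]
      constructor
      · rintro ⟨hlen, hred, hhead⟩
        rcases w with _ | ⟨x, t⟩
        · simp at hlen
        · refine ⟨x, ?_, t, ⟨by simpa using hlen, hred.tail', ?_⟩, rfl⟩
          · intro hxc; subst hxc; simp at hhead
          · rw [← forall_mem_ne_iff]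
            intro y hy hyb
            have := (List.isChain_cons.1 hred).1 y hy
            exact this hyb
      · rintro ⟨x, hxc, t, ⟨hlen, hred, hhead⟩, rfl⟩
        refine ⟨by simp [hlen], ?_, by simpa using hxc⟩
        refine List.isChain_cons.2 ⟨?_, hred⟩
        intro y hy
        exact (forall_mem_ne_iff _ _).2 hhead y hy
    rw [hdec, Finset.card_biUnion]
    · have hcard : ∀ x : Letter r,
          ((Tset r k (bar x)).image (x :: ·)).card = (2 * r - 1) ^ k := by
        intro x
        rw [Finset.card_image_of_injective _ (fun a b h => by simpa using h), ih]
      rw [Finset.sum_congr rfl (fun x _ => hcard x)]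
      rw [Finset.sum_const, smul_eq_mul]
      have : (Finset.univ.filter (fun x : Letter r => x ≠ c)).card = 2 * r - 1 := by
        rw [Finset.filter_ne', Finset.card_erase_of_mem (Finset.mem_univ c)]
        simp only [Finset.card_univ, card_letters]
      rw [this, pow_succ, mul_comm]
    · intro x _ y _ hxy
      simp only [Finset.disjoint_left, Finset.mem_image]
      rintro w ⟨t, _, rfl⟩ ⟨t', _, h⟩
      exact hxy (by simpa using (List.cons_eq_cons.1 h).1.symm)

lemma RW_card (k : ℕ) : (RW r (k + 1)).card = 2 * r * (2 * r - 1) ^ k := by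
  have hdec : RW r (k + 1) =
      Finset.univ.biUnion (fun x : Letter r => (Tset r k (bar x)).image (x :: ·)) := by
    ext w
    simp only [Finset.mem_biUnion, Finset.mem_univ, true_and, Finset.mem_image, mem_Tset, mem_RW]
    constructor
    · rintro ⟨hlen, hred⟩
      rcases w with _ | ⟨x, t⟩
      · simp at hlen
      · refine ⟨x, t, ⟨by simpa using hlen, hred.tail', ?_⟩, rfl⟩
        rw [← forall_mem_ne_iff]
        intro y hy hyb
        exact (List.isChain_cons.1 hred).1 y hy hyb
    · rintro ⟨x, t, ⟨hlen, hred, hhead⟩, rfl⟩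
      exact ⟨by simp [hlen], List.isChain_cons.2 ⟨fun y hy => (forall_mem_ne_iff _ _).2 hhead y hy, hred⟩⟩
  rw [hdec, Finset.card_biUnion]
  · rw [Finset.sum_congr rfl (fun x _ => by
      rw [Finset.card_image_of_injective _ (fun a b h => by simpa using h), Tset_card])]
    rw [Finset.sum_const, smul_eq_mul, Finset.card_univ, card_letters]
  · intro x _ y _ hxy
    simp only [Finset.disjoint_left, Finset.mem_image]
    rintro w ⟨t, _, rfl⟩ ⟨t', _, h⟩
    exact hxy (by simpa using (List.cons_eq_cons.1 h).1.symm)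

/-- Reduced words, first letter ≠ c, last letter = b. -/
noncomputable def Dset (r k : ℕ) (c b : Letter r) : Finset (List (Letter r)) :=
  (Tset r k c).filter (fun w => w.getLast? = some b)

lemma Dset_split (k : ℕ) (c b : Letter r) :
    (Dset r k c b).card + ((Tset r k c).filter (fun w => w.getLast? ≠ some b)).card
      = (2 * r - 1) ^ k := by
  have h := Finset.card_filter_add_card_filter_not
    (s := Tset r k c) (p := fun w => w.getLast? = some b)
  rw [Tset_card] at h
  simpa [Dset] using h

/-- appending bijection -/
lemma Dset_succ_card (k : ℕ) (hk : 1 ≤ k) (c b : Letter r) :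
    (Dset r (k + 1) c b).card
      = ((Tset r k c).filter (fun w => w.getLast? ≠ some (bar b))).card := by
  apply Finset.card_bij' (fun w _ => w.dropLast) (fun w _ => w ++ [b])
  · -- maps into
    intro w hw
    simp only [Dset, Finset.mem_filter, mem_Tset] at hw
    obtain ⟨⟨hlen, hred, hhead⟩, hlast⟩ := hw
    have hne : w ≠ [] := by intro h; subst h; simp at hlen
    have hw' : w.dropLast ++ [b] = w := by
      have := List.dropLast_append_getLast? b (by simpa using hlast)
      exact this
    have hdne : w.dropLast ≠ [] := by
      intro h
      have : w.length = 1 := by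
        have := congrArg List.length hw'
        rw [h] at this; simpa using this.symm
      omega
    simp only [Finset.mem_filter, mem_Tset]
    refine ⟨⟨by simp [hlen], ?_, ?_⟩, ?_⟩
    · exact List.IsChain.prefix hred (List.dropLast_prefix w)
    · rwa [← hw', List.head?_append_of_ne_nil _ hdne] at hhead
    · -- last of dropLast ≠ bar b
      have hch : List.Chain' (fun a b : Letter r => b ≠ bar a) (w.dropLast ++ [b]) := by
        rw [hw']; exact hred
      have := (List.isChain_append.1 hch).2.2
      intro hcontra
      exact this (bar b) (by simp [hcontra]) b (by simp) (by simp)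
  · -- reverse maps into
    intro w hw
    simp only [Finset.mem_filter, mem_Tset] at hw
    obtain ⟨⟨hlen, hred, hhead⟩, hlast⟩ := hw
    have hne : w ≠ [] := by intro h; subst h; simp at hlen; omega
    simp only [Dset, Finset.mem_filter, mem_Tset]
    refine ⟨⟨by simp [hlen], ?_, ?_⟩, by simp⟩
    · refine List.isChain_append.2 ⟨hred, List.isChain_singleton b, ?_⟩
      rintro x hx y hy
      simp only [List.head?_cons, Option.mem_some_iff] at hy
      subst hy
      intro hxb
      apply hlast
      rw [hxb, bar_bar]
      exact Option.mem_def.1 hx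
    · rwa [List.head?_append_of_ne_nil _ hne]
  · intro w hw
    simp only [Dset, Finset.mem_filter, mem_Tset] at hw
    exact List.dropLast_append_getLast? b (by simpa using hw.2)
  · intro w hw
    simp [List.dropLast_concat]

lemma Dset_bounds (hr : 2 ≤ r) : ∀ (k : ℕ), 1 ≤ k → ∀ (c b : Letter r),
    2 * r * (Dset r k c b).card ≤ (2 * r - 1) ^ k + (2 * r - 1) ∧
    (2 * r - 1) ^ k ≤ 2 * r * (Dset r k c b).card + (2 * r - 1) := by
  intro k
  induction k with
  | zero => omega
  | succ k ih =>
    intro _ c b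
    rcases Nat.eq_zero_or_pos k with hk0 | hk'
    · -- base: k + 1 = 1
      subst hk0
      have hset : Dset r 1 c b = if b = c then ∅ else {[b]} := by
        ext w
        simp only [Dset, Finset.mem_filter, mem_Tset]
        split
        · rename_i hbc
          subst hbc
          simp only [Finset.notMem_empty, iff_false]
          rintro ⟨⟨hlen, hred, hhead⟩, hlast⟩
          rcases w with _ | ⟨x, t⟩
          · simp at hlen
          · have : t = [] := by simpa using hlen
            subst this
            simp only [List.head?_cons, ne_eq, Option.some.injEq] at hhead
            simp only [List.getLast?_singleton, Option.some.injEq] at hlast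
            exact hhead hlast
        · rename_i hbc
          simp only [Finset.mem_singleton]
          constructor
          · rintro ⟨⟨hlen, hred, hhead⟩, hlast⟩
            rcases w with _ | ⟨x, t⟩
            · simp at hlen
            · have : t = [] := by simpa using hlen
              subst this
              simp only [List.getLast?_singleton, Option.some.injEq] at hlast
              simp [hlast]
          · rintro rfl
            exact ⟨⟨rfl, List.isChain_singleton b, by simpa using fun h => hbc h⟩, by simp⟩
      have hcard : (Dset r 1 c b).card = if b = c then 0 else 1 := by
        rw [hset]; split <;> simp
      rw [hcard]
      simp only [zero_add, pow_one]
      split <;> omega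
    · have hrec := Dset_succ_card (r := r) k hk' c (b := b)
      have hsplit := Dset_split (r := r) k c (bar b)
      have hih := ih hk' c (bar b)
      have hAB : (Dset r (k+1) c b).card + (Dset r k c (bar b)).card = (2*r-1) ^ k := by
        omega
      have S : 2*r*(Dset r (k+1) c b).card + 2*r*(Dset r k c (bar b)).card
          = 2*r*((2*r-1) ^ k) := by
        rw [← Nat.mul_add, hAB]
      have e : 2*r*((2*r-1) ^ k) = (2*r-1) ^ (k+1) + (2*r-1) ^ k := by
        have egen : ∀ q : ℕ, (q+1)*(q^k) = q^(k+1) + q^k := fun q => by rw [pow_succ]; ring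
        rw [← egen (2*r-1)]
        congr 1
        omega
      constructor
      · linarith [hih.2]
      · linarith [hih.1]

lemma Xset_bound (hr : 2 ≤ r) (k : ℕ) (hk : 1 ≤ k) (c b : Letter r) :
    2 * r * (((Tset r k c).filter (fun w => w.getLast? ≠ some b)).card)
      ≤ (2 * r - 1) ^ (k + 1) + (2 * r - 1) := by
  have hsplit := Dset_split (r := r) k c b
  have hlow := (Dset_bounds hr k hk c b).2
  have e : 2*r*((2*r-1) ^ k) = (2*r-1) ^ (k+1) + (2*r-1) ^ k := by
    have egen : ∀ q : ℕ, (q+1)*(q^k) = q^(k+1) + q^k := fun q => by rw [pow_succ]; ring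
    rw [← egen (2*r-1)]
    congr 1
    omega
  have S : 2*r*(Dset r k c b).card
      + 2*r*(((Tset r k c).filter (fun w => w.getLast? ≠ some b)).card)
      = 2*r*((2*r-1) ^ k) := by
    rw [← Nat.mul_add, hsplit]
  linarith

/-- decomposition of a reduced word with given prefix and suffix -/
lemma glue_decomp {p s w : List (Letter r)} (hp : p ≠ []) (hs : s ≠ [])
    (hred : Reduced w) (hpre : p <+: w) (hsuf : s <:+ w)
    (hn : p.length + s.length + 1 ≤ w.length) :
    w = p ++ ((w.drop p.length).take (w.length - p.length - s.length)) ++ s ∧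
    ((w.drop p.length).take (w.length - p.length - s.length)) ∈
      (Tset r (w.length - p.length - s.length) (bar (p.getLast hp))).filter
        (fun m => m.getLast? ≠ some (bar (s.head hs))) := by
  set k := w.length - p.length - s.length with hkdef
  have hk : 1 ≤ k := by omega
  obtain ⟨t, ht⟩ := hpre
  obtain ⟨t2, ht2⟩ := hsuf
  have hdt : w.drop p.length = t := by rw [← ht, List.drop_left]
  have htlen : t.length = k + s.length := by
    have := congrArg List.length ht
    simp at this
    omega
  have ht2len : t2.length = p.length + k := by
    have := congrArg List.length ht2
    simp at this
    omega
  have htk : t = t.take k ++ s := by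
    have h1 : t2 ++ s = p ++ t := by rw [ht2, ht]
    have h2 : (t2 ++ s).take (p.length + k) = t2 := List.take_left' ht2len
    have h3 : (p ++ t).take (p.length + k) = p ++ t.take k := List.take_length_add_append k
    have h4 : t2 = p ++ t.take k := by rw [← h2, h1, h3]
    have h5 : (p ++ t.take k) ++ s = p ++ t := by rw [← h4, h1]
    rw [List.append_assoc] at h5
    exact (List.append_cancel_left h5).symm
  have hmid : (w.drop p.length).take k = t.take k := by rw [hdt]
  have hw : w = p ++ t.take k ++ s := by
    rw [List.append_assoc, ← htk, ht]
  have hmidlen : (t.take k).length = k := by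
    rw [List.length_take]
    omega
  have hmidne : t.take k ≠ [] := by
    intro h
    rw [h] at hmidlen
    simp at hmidlen
    omega
  -- chain conditions
  have hchain : List.Chain' (fun a b : Letter r => b ≠ bar a) (p ++ (t.take k ++ s)) := by
    rw [← List.append_assoc, ← hw]
    exact hred
  have hc1 := List.isChain_append.1 hchain
  have hc2 := List.isChain_append.1 hc1.2.1
  have hredmid : Reduced (t.take k) := hc2.1
  have hhead : (t.take k).head? ≠ some (bar (p.getLast hp)) := by
    intro hcontra
    have hy : (t.take k ++ s).head? = some (bar (p.getLast hp)) := by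
      rw [List.head?_append_of_ne_nil _ hmidne]
      exact hcontra
    exact hc1.2.2 (p.getLast hp) (List.getLast?_eq_getLast hp ▸ Option.mem_def.2 rfl)
      (bar (p.getLast hp)) (Option.mem_def.2 hy) rfl
  have hlast : (t.take k).getLast? ≠ some (bar (s.head hs)) := by
    intro hcontra
    have := hc2.2.2 (bar (s.head hs)) (Option.mem_def.2 hcontra)
      (s.head hs) (List.head?_eq_head hs ▸ Option.mem_def.2 rfl)
    simp at this
  rw [hmid]
  refine ⟨hw, ?_⟩
  simp only [Finset.mem_filter, mem_Tset]
  exact ⟨⟨hmidlen, hredmid, hhead⟩, hlast⟩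

lemma glue_bound (hr : 2 ≤ r) {p s : List (Letter r)} (hp : p ≠ []) (hs : s ≠ [])
    (n : ℕ) (hn : p.length + s.length + 1 ≤ n) :
    2 * r * (((RW r n).filter (fun w => p <+: w ∧ s <:+ w)).card)
      ≤ (2 * r - 1) ^ (n - p.length - s.length + 1) + (2 * r - 1) := by
  have hk : 1 ≤ n - p.length - s.length := by omega
  have hcard : (((RW r n).filter (fun w => p <+: w ∧ s <:+ w)).card) ≤
      ((Tset r (n - p.length - s.length) (bar (p.getLast hp))).filter
        (fun m => m.getLast? ≠ some (bar (s.head hs)))).card := by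
    apply Finset.card_le_card_of_injOn (fun w => (w.drop p.length).take (n - p.length - s.length))
    · intro w hw
      simp only [Finset.coe_filter, Set.mem_setOf_eq, mem_RW] at hw
      obtain ⟨⟨hlen, hred⟩, hpre, hsuf⟩ := hw
      have h := glue_decomp hp hs hred hpre hsuf (by omega)
      rw [hlen] at h
      exact h.2
    · intro w1 hw1 w2 hw2 heq
      simp only [Finset.coe_filter, Set.mem_setOf_eq, mem_RW] at hw1 hw2
      obtain ⟨⟨hlen1, hred1⟩, hpre1, hsuf1⟩ := hw1
      obtain ⟨⟨hlen2, hred2⟩, hpre2, hsuf2⟩ := hw2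
      have h1 := (glue_decomp hp hs hred1 hpre1 hsuf1 (by omega)).1
      have h2 := (glue_decomp hp hs hred2 hpre2 hsuf2 (by omega)).1
      rw [hlen1] at h1
      rw [hlen2] at h2
      simp only at heq
      rw [h1, h2, heq]
    
  calc 2 * r * (((RW r n).filter (fun w => p <+: w ∧ s <:+ w)).card)
      ≤ 2 * r * (((Tset r (n - p.length - s.length) (bar (p.getLast hp))).filter
        (fun m => m.getLast? ≠ some (bar (s.head hs)))).card) := Nat.mul_le_mul_left _ hcard
    _ ≤ (2 * r - 1) ^ (n - p.length - s.length + 1) + (2 * r - 1) :=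
        Xset_bound hr _ hk _ _

lemma mem_sphere {n : ℕ} {γ : FreeGroup (Fin r)} :
    γ ∈ sphere r n ↔ (FreeGroup.toWord γ).length = n := by
  simp [sphere, Set.Finite.mem_toFinset]

lemma invRev_reduced {l : List (Letter r)} (h : Reduced l) :
    Reduced (FreeGroup.invRev l) := by
  rw [← reduce_eq_self_iff] at h ⊢
  rw [FreeGroup.reduce_invRev, h]

lemma invRev_append (l₁ l₂ : List (Letter r)) :
    FreeGroup.invRev (l₁ ++ l₂) = FreeGroup.invRev l₂ ++ FreeGroup.invRev l₁ := by
  simp [FreeGroup.invRev]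

lemma prefix_invRev_iff (p w : List (Letter r)) :
    p <+: FreeGroup.invRev w ↔ FreeGroup.invRev p <:+ w := by
  constructor
  · rintro ⟨t, ht⟩
    refine ⟨FreeGroup.invRev t, ?_⟩
    have := congrArg FreeGroup.invRev ht
    rw [invRev_append, FreeGroup.invRev_invRev] at this
    exact this
  · rintro ⟨t, ht⟩
    refine ⟨FreeGroup.invRev t, ?_⟩
    have := congrArg FreeGroup.invRev ht
    rw [invRev_append] at this
    rw [← this, FreeGroup.invRev_invRev]

/-- transfer of filtered-sphere cards to filtered-RW cards -/
lemma sphere_filter_card (n : ℕ) (Q : List (Letter r) → Prop) [DecidablePred Q] :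
    ((sphere r n).filter (fun γ => Q (FreeGroup.toWord γ))).card
      = ((RW r n).filter Q).card := by
  apply Finset.card_bij (fun γ _ => FreeGroup.toWord γ)
  · intro γ hγ
    simp only [Finset.mem_filter, mem_sphere] at hγ
    simp only [Finset.mem_filter, mem_RW]
    exact ⟨⟨hγ.1, reduced_toWord γ⟩, hγ.2⟩
  · intro γ1 _ γ2 _ h
    exact FreeGroup.toWord_injective h
  · intro l hl
    simp only [Finset.mem_filter, mem_RW] at hl
    refine ⟨FreeGroup.mk l, ?_, (toWord_mk_of_reduced hl.1.2)⟩
    simp only [Finset.mem_filter, mem_sphere, toWord_mk_of_reduced hl.1.2]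
    exact ⟨hl.1.1, hl.2⟩

lemma sphere_card (n : ℕ) : (sphere r n).card = (RW r n).card := by
  have := sphere_filter_card (r := r) n (fun _ => True)
  simpa using this

lemma measurable_eval (i : ℕ) : Measurable (fun ξ : Boundary r => ξ.1 i) :=
  (measurable_pi_apply i).comp measurable_subtype_coe

lemma measurable_prefixSet (l : List (Letter r)) :
    MeasurableSet {ξ : Boundary r | IsPrefixSeq l ξ.1} := by
  have : {ξ : Boundary r | IsPrefixSeq l ξ.1}
      = ⋂ i ∈ Finset.range l.length, {ξ : Boundary r | l[i]? = some (ξ.1 i)} := by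
    ext ξ
    simp [IsPrefixSeq]
  rw [this]
  refine MeasurableSet.biInter (Set.to_countable _) (fun i _ => ?_)
  have : {ξ : Boundary r | l[i]? = some (ξ.1 i)}
      = (fun ξ : Boundary r => ξ.1 i) ⁻¹' {a | l[i]? = some a} := rfl
  rw [this]
  exact (measurable_eval i) ((Set.toFinite {a : Letter r | l[i]? = some a}).measurableSet)

lemma gromov_le (l : List (Letter r)) (ξ : ℕ → Letter r) : gromov l ξ ≤ l.length :=
  Nat.findGreatest_le _

lemma le_gromov_iff {l : List (Letter r)} {ξ : ℕ → Letter r} {k : ℕ} :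
    k ≤ gromov l ξ ↔ k ≤ l.length ∧ ∀ i, i < k → l[i]? = some (ξ i) := by
  constructor
  · intro h
    have h1 : gromov l ξ ≤ l.length := gromov_le l ξ
    have hP : ∀ i, i < gromov l ξ → l[i]? = some (ξ i) := by
      have := Nat.findGreatest_spec (P := fun k => ∀ i, i < k → l[i]? = some (ξ i))
        (m := 0) (n := l.length) (Nat.zero_le _) (fun i hi => by omega)
      exact this
    exact ⟨le_trans h h1, fun i hi => hP i (lt_of_lt_of_le hi h)⟩
  · rintro ⟨h1, h2⟩
    exact Nat.le_findGreatest h1 h2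

lemma le_gromov_iff_prefix {l : List (Letter r)} {ξ : ℕ → Letter r} {k : ℕ}
    (hk : k ≤ l.length) :
    k ≤ gromov l ξ ↔ IsPrefixSeq (l.take k) ξ := by
  rw [le_gromov_iff]
  unfold IsPrefixSeq
  constructor
  · rintro ⟨-, h⟩ i hi
    rw [List.length_take] at hi
    rw [List.getElem?_take]
    simp only [if_pos (show i < k by omega)]
    exact h i (by omega)
  · intro h
    refine ⟨hk, fun i hi => ?_⟩
    have := h i (by rw [List.length_take]; omega)
    rw [List.getElem?_take] at this
    simpa only [if_pos hi] using this

lemma measure_prefixSet (μ : Measure (Boundary r))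
    (hμ : ∀ u : FreeGroup (Fin r), u ≠ 1 →
      μ (cylinder u) =
        1 / (2 * (r : ℝ≥0∞) * (2 * (r : ℝ≥0∞) - 1) ^ ((FreeGroup.toWord u).length - 1)))
    {l : List (Letter r)} (hred : Reduced l) (hne : l ≠ []) :
    μ {ξ : Boundary r | IsPrefixSeq l ξ.1}
      = 1 / (2 * (r : ℝ≥0∞) * (2 * (r : ℝ≥0∞) - 1) ^ (l.length - 1)) := by
  have hne1 : FreeGroup.mk l ≠ 1 := by
    intro h
    apply hne
    have := toWord_mk_of_reduced hred
    rw [h, FreeGroup.toWord_one] at this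
    exact this.symm
  have := hμ (FreeGroup.mk l) hne1
  rw [toWord_mk_of_reduced hred] at this
  have hcyl : cylinder (FreeGroup.mk l) = {ξ : Boundary r | IsPrefixSeq l ξ.1} := by
    unfold cylinder
    rw [toWord_mk_of_reduced hred]
  rw [← hcyl]
  exact this

lemma ennreal_denom_eq (hr : 2 ≤ r) (j : ℕ) :
    2 * (r : ℝ≥0∞) * (2 * (r : ℝ≥0∞) - 1) ^ j = ((2 * r * (2 * r - 1) ^ j : ℕ) : ℝ≥0∞) := by
  have h1 : ((2 * r - 1 : ℕ) : ℝ≥0∞) = 2 * (r : ℝ≥0∞) - 1 := by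
    refine ENNReal.eq_sub_of_add_eq (by simp) ?_
    have e : (2 * r - 1) + 1 = 2 * r := by omega
    have : ((2 * r - 1 : ℕ) : ℝ≥0∞) + ((1 : ℕ) : ℝ≥0∞) = (((2 * r - 1) + 1 : ℕ) : ℝ≥0∞) :=
      (Nat.cast_add _ _).symm
    rw [Nat.cast_one] at this
    rw [this, e]
    push_cast
    ring
  push_cast
  rw [← h1]

lemma measure_prefixSet_toReal (hr : 2 ≤ r) (μ : Measure (Boundary r))
    (hμ : ∀ u : FreeGroup (Fin r), u ≠ 1 →
      μ (cylinder u) =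
        1 / (2 * (r : ℝ≥0∞) * (2 * (r : ℝ≥0∞) - 1) ^ ((FreeGroup.toWord u).length - 1)))
    {l : List (Letter r)} (hred : Reduced l) (hne : l ≠ []) :
    (μ {ξ : Boundary r | IsPrefixSeq l ξ.1}).toReal
      = 1 / (2 * (r : ℝ) * (2 * (r : ℝ) - 1) ^ (l.length - 1)) := by
  rw [measure_prefixSet μ hμ hred hne, ennreal_denom_eq hr, one_div, ENNReal.toReal_inv,
    ENNReal.toReal_natCast]
  rw [one_div]
  congr 1
  push_cast [Nat.cast_sub (show 1 ≤ 2 * r by omega)]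
  ring

lemma Fw_eq_sum (w : List (Letter r)) (ξ : Boundary r) :
    ((2 * (r:ℝ) - 1) ^ (gromov w ξ.1) : ℝ) = 1 + ∑ k ∈ Finset.range w.length,
      Set.indicator {ξ' : Boundary r | IsPrefixSeq (w.take (k+1)) ξ'.1}
        (fun _ => (2 * (r:ℝ) - 1) ^ (k+1) - (2 * (r:ℝ) - 1) ^ k) ξ := by
  set Q : ℝ := 2 * (r:ℝ) - 1
  set g := gromov w ξ.1 with hg
  have hgle : g ≤ w.length := gromov_le w ξ.1
  have hsum : ∀ k ∈ Finset.range w.length,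
      Set.indicator {ξ' : Boundary r | IsPrefixSeq (w.take (k+1)) ξ'.1}
        (fun _ => Q ^ (k+1) - Q ^ k) ξ
      = if k < g then Q ^ (k+1) - Q ^ k else 0 := by
    intro k hk
    rw [Finset.mem_range] at hk
    classical
    rw [Set.indicator_apply]
    congr 1
    simp only [eq_iff_iff, Set.mem_setOf_eq]
    rw [← le_gromov_iff_prefix (by omega)]
    omega
  rw [Finset.sum_congr rfl hsum, ← Finset.sum_filter]
  have hfil : (Finset.range w.length).filter (fun k => k < g) = Finset.range g := by
    ext a
    simp only [Finset.mem_filter, Finset.mem_range]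
    omega
  rw [hfil, Finset.sum_range_sub (fun k => Q ^ k)]
  simp

lemma integrable_Fw (μ : Measure (Boundary r)) [IsProbabilityMeasure μ]
    (w : List (Letter r)) :
    Integrable (fun ξ : Boundary r => ((2 * (r:ℝ) - 1) ^ (gromov w ξ.1) : ℝ)) μ := by
  have : (fun ξ : Boundary r => ((2 * (r:ℝ) - 1) ^ (gromov w ξ.1) : ℝ))
      = fun ξ => 1 + ∑ k ∈ Finset.range w.length,
        Set.indicator {ξ' : Boundary r | IsPrefixSeq (w.take (k+1)) ξ'.1}
          (fun _ => (2 * (r:ℝ) - 1) ^ (k+1) - (2 * (r:ℝ) - 1) ^ k) ξ :=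
    funext (Fw_eq_sum w)
  rw [this]
  apply Integrable.add (integrable_const 1)
  apply integrable_finset_sum
  intro k _
  exact (integrable_const _).indicator (measurable_prefixSet _)

lemma integral_Fw (hr : 2 ≤ r) (μ : Measure (Boundary r)) [IsProbabilityMeasure μ]
    (hμ : ∀ u : FreeGroup (Fin r), u ≠ 1 →
      μ (cylinder u) =
        1 / (2 * (r : ℝ≥0∞) * (2 * (r : ℝ≥0∞) - 1) ^ ((FreeGroup.toWord u).length - 1)))
    {w : List (Letter r)} (hred : Reduced w) :
    ∫ ξ, ((2 * (r:ℝ) - 1) ^ (gromov w ξ.1) : ℝ) ∂μ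
      = 1 + w.length * ((2 * (r:ℝ) - 1) - 1) / (2 * (r:ℝ)) := by
  rw [integral_congr_ae (Filter.Eventually.of_forall (Fw_eq_sum w))]
  rw [integral_add (integrable_const 1) (integrable_finset_sum _
    (fun k _ => (integrable_const _).indicator (measurable_prefixSet _)))]
  rw [integral_const, integral_finset_sum _
    (fun k _ => (integrable_const _).indicator (measurable_prefixSet _))]
  have hterm : ∀ k ∈ Finset.range w.length,
      ∫ ξ, Set.indicator {ξ' : Boundary r | IsPrefixSeq (w.take (k+1)) ξ'.1}
        (fun _ => (2 * (r:ℝ) - 1) ^ (k+1) - (2 * (r:ℝ) - 1) ^ k) ξ ∂μ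
      = ((2 * (r:ℝ) - 1) - 1) / (2 * (r:ℝ)) := by
    intro k hk
    rw [Finset.mem_range] at hk
    rw [integral_indicator_const _ (measurable_prefixSet _)]
    have hredk : Reduced (w.take (k+1)) := List.IsChain.take hred _
    have hnek : w.take (k+1) ≠ [] := by
      intro h
      have := congrArg List.length h
      simp only [List.length_take, List.length_nil] at this
      omega
    rw [measureReal_def, measure_prefixSet_toReal hr μ hμ hredk hnek]
    have hlenk : (w.take (k+1)).length - 1 = k := by
      simp only [List.length_take]
      omega
    rw [hlenk]
    have hQ : (0:ℝ) < 2 * (r:ℝ) - 1 := by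
      have : (2:ℝ) ≤ (r:ℝ) := by exact_mod_cast hr
      linarith
    have h2r : (0:ℝ) < 2 * (r:ℝ) := by positivity
    have hQk : (0:ℝ) < (2 * (r:ℝ) - 1) ^ k := pow_pos hQ k
    rw [smul_eq_mul]
    rw [pow_succ]
    field_simp
  rw [Finset.sum_congr rfl hterm, Finset.sum_const, Finset.card_range]
  simp only [smul_eq_mul, measureReal_def, measure_univ, ENNReal.toReal_one, one_smul]
  ring

lemma hQpos (hr : 2 ≤ r) : (0:ℝ) < 2 * (r:ℝ) - 1 := by
  have : (2:ℝ) ≤ (r:ℝ) := by exact_mod_cast hr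
  linarith

lemma sqrtPK_eq (hr : 2 ≤ r) (γ : FreeGroup (Fin r)) (ξ : Boundary r) :
    Real.sqrt (PK γ ξ) = (Real.sqrt (2 * (r:ℝ) - 1)) ^ (-((FreeGroup.toWord γ).length : ℤ))
      * (2 * (r:ℝ) - 1) ^ (gromov (FreeGroup.toWord γ) ξ.1) := by
  set Q : ℝ := 2 * (r:ℝ) - 1 with hQdef
  have hQ : (0:ℝ) < Q := hQpos hr
  set σ : ℝ := Real.sqrt Q with hσdef
  have hσ : (0:ℝ) < σ := Real.sqrt_pos.2 hQ
  have hσsq : σ * σ = Q := Real.mul_self_sqrt hQ.le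
  set g : ℕ := gromov (FreeGroup.toWord γ) ξ.1
  set n : ℕ := (FreeGroup.toWord γ).length
  have hPK : PK γ ξ = σ ^ (2 * (g:ℤ) - (n:ℤ)) * σ ^ (2 * (g:ℤ) - (n:ℤ)) := by
    unfold PK
    rw [← zpow_add₀ hσ.ne']
    have : (2 * (g:ℤ) - (n:ℤ)) + (2 * (g:ℤ) - (n:ℤ)) = 2 * (2 * (g:ℤ) - (n:ℤ)) := by ring
    rw [this, mul_comm (2:ℤ), zpow_mul, zpow_two, hσsq]
  rw [hPK, Real.sqrt_mul_self (zpow_nonneg hσ.le _)]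
  have : (2 * (g:ℤ) - (n:ℤ)) = (-(n:ℤ)) + 2 * (g:ℤ) := by ring
  rw [this, zpow_add₀ hσ.ne']
  congr 1
  rw [mul_comm (2:ℤ), zpow_mul, zpow_two, zpow_natCast, ← mul_pow, hσsq]

lemma integrable_sqrtPK (hr : 2 ≤ r) (μ : Measure (Boundary r)) [IsProbabilityMeasure μ]
    (γ : FreeGroup (Fin r)) :
    Integrable (fun ξ => Real.sqrt (PK γ ξ)) μ := by
  have : (fun ξ => Real.sqrt (PK γ ξ))
      = fun ξ => (Real.sqrt (2 * (r:ℝ) - 1)) ^ (-((FreeGroup.toWord γ).length : ℤ))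
        * (2 * (r:ℝ) - 1) ^ (gromov (FreeGroup.toWord γ) ξ.1) := funext (sqrtPK_eq hr γ)
  rw [this]
  exact (integrable_Fw μ _).const_mul _

lemma HC_eq (hr : 2 ≤ r) (μ : Measure (Boundary r)) [IsProbabilityMeasure μ]
    (hμ : ∀ u : FreeGroup (Fin r), u ≠ 1 →
      μ (cylinder u) =
        1 / (2 * (r : ℝ≥0∞) * (2 * (r : ℝ≥0∞) - 1) ^ ((FreeGroup.toWord u).length - 1)))
    (γ : FreeGroup (Fin r)) :
    HC μ γ = (Real.sqrt (2 * (r:ℝ) - 1)) ^ (-((FreeGroup.toWord γ).length : ℤ))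
      * (1 + (FreeGroup.toWord γ).length * ((2 * (r:ℝ) - 1) - 1) / (2 * (r:ℝ))) := by
  unfold HC
  rw [integral_congr_ae (Filter.Eventually.of_forall (sqrtPK_eq hr γ))]
  rw [integral_const_mul, integral_Fw hr μ hμ (reduced_toWord γ)]

lemma setIntegral_sqrtPK (hr : 2 ≤ r) (μ : Measure (Boundary r)) [IsProbabilityMeasure μ]
    (v γ : FreeGroup (Fin r)) :
    ∫ ξ in cylinder v, Real.sqrt (PK γ ξ) ∂μ
      = (Real.sqrt (2 * (r:ℝ) - 1)) ^ (-((FreeGroup.toWord γ).length : ℤ))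
        * ∫ ξ in cylinder v, ((2 * (r:ℝ) - 1) ^ (gromov (FreeGroup.toWord γ) ξ.1) : ℝ) ∂μ := by
  rw [integral_congr_ae (Filter.Eventually.of_forall (fun ξ => sqrtPK_eq hr γ ξ))]
  exact integral_const_mul _ _

lemma term_eq (hr : 2 ≤ r) (μ : Measure (Boundary r)) [IsProbabilityMeasure μ]
    (hμ : ∀ u : FreeGroup (Fin r), u ≠ 1 →
      μ (cylinder u) =
        1 / (2 * (r : ℝ≥0∞) * (2 * (r : ℝ≥0∞) - 1) ^ ((FreeGroup.toWord u).length - 1)))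
    (v γ : FreeGroup (Fin r)) :
    (∫ ξ in cylinder v, Real.sqrt (PK γ ξ) ∂μ) / HC μ γ
      = (∫ ξ in cylinder v, ((2 * (r:ℝ) - 1) ^ (gromov (FreeGroup.toWord γ) ξ.1) : ℝ) ∂μ)
        / (1 + (FreeGroup.toWord γ).length * ((2 * (r:ℝ) - 1) - 1) / (2 * (r:ℝ))) := by
  rw [setIntegral_sqrtPK hr μ v γ, HC_eq hr μ hμ γ]
  apply mul_div_mul_left
  exact (zpow_pos (Real.sqrt_pos.2 (hQpos hr)) _).ne'

lemma term_nonneg (μ : Measure (Boundary r)) (v γ : FreeGroup (Fin r)) :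
    0 ≤ (∫ ξ in cylinder v, Real.sqrt (PK γ ξ) ∂μ) / HC μ γ :=
  div_nonneg (integral_nonneg fun _ => Real.sqrt_nonneg _)
    (integral_nonneg fun _ => Real.sqrt_nonneg _)

lemma term_le_one (hr : 2 ≤ r) (μ : Measure (Boundary r)) [IsProbabilityMeasure μ]
    (v γ : FreeGroup (Fin r)) :
    (∫ ξ in cylinder v, Real.sqrt (PK γ ξ) ∂μ) / HC μ γ ≤ 1 := by
  apply div_le_one_of_le₀
  · exact setIntegral_le_integral (integrable_sqrtPK hr μ γ)
      (Filter.Eventually.of_forall (fun ξ => Real.sqrt_nonneg _))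
  · exact integral_nonneg fun _ => Real.sqrt_nonneg _

lemma gromov_le_of_not_prefix {v : FreeGroup (Fin r)} {w : List (Letter r)}
    (hv : FreeGroup.toWord v ≠ []) (hnp : ¬ (FreeGroup.toWord v <+: w))
    {ξ : Boundary r} (hξ : ξ ∈ cylinder v) :
    gromov w ξ.1 ≤ (FreeGroup.toWord v).length - 1 := by
  set m := (FreeGroup.toWord v).length with hm
  have hm1 : 1 ≤ m := by
    rcases (FreeGroup.toWord v).eq_nil_or_concat with h | ⟨l, a, h⟩
    · exact absurd h hv
    · rw [hm, h]; simp
  by_contra hcon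
  push_neg at hcon
  have hgm : m ≤ gromov w ξ.1 := by omega
  have hmlen : m ≤ w.length := le_trans hgm (gromov_le w ξ.1)
  have hpre : IsPrefixSeq (w.take m) ξ.1 := (le_gromov_iff_prefix hmlen).1 hgm
  have hveq : w.take m = FreeGroup.toWord v := by
    apply List.ext_getElem?
    intro i
    by_cases hi : i < m
    · rw [hpre i (by rw [List.length_take]; omega), hξ i (by omega)]
    · rw [List.getElem?_eq_none, List.getElem?_eq_none]
      · omega
      · rw [List.length_take]; omega
  exact hnp ⟨w.drop m, by rw [← hveq, List.take_append_drop]⟩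

lemma term_le_eps (hr : 2 ≤ r) (μ : Measure (Boundary r)) [IsProbabilityMeasure μ]
    (hμ : ∀ u : FreeGroup (Fin r), u ≠ 1 →
      μ (cylinder u) =
        1 / (2 * (r : ℝ≥0∞) * (2 * (r : ℝ≥0∞) - 1) ^ ((FreeGroup.toWord u).length - 1)))
    (v γ : FreeGroup (Fin r)) (hv : FreeGroup.toWord v ≠ [])
    (hnp : ¬ (FreeGroup.toWord v <+: FreeGroup.toWord γ))
    (hn : 1 ≤ (FreeGroup.toWord γ).length) :
    (∫ ξ in cylinder v, Real.sqrt (PK γ ξ) ∂μ) / HC μ γ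
      ≤ (2 * (r:ℝ) - 1) ^ ((FreeGroup.toWord v).length - 1) * (2 * (r:ℝ))
        / ((FreeGroup.toWord γ).length * ((2 * (r:ℝ) - 1) - 1)) := by
  rw [term_eq hr μ hμ v γ]
  set Q : ℝ := 2 * (r:ℝ) - 1 with hQdef
  have hQ : (0:ℝ) < Q := hQpos hr
  have hQ1 : (1:ℝ) < Q := by
    have : (2:ℝ) ≤ (r:ℝ) := by exact_mod_cast hr
    rw [hQdef]; linarith
  set n : ℕ := (FreeGroup.toWord γ).length
  set m : ℕ := (FreeGroup.toWord v).length
  have h2r : (0:ℝ) < 2 * (r:ℝ) := by positivity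
  have hnum : (∫ ξ in cylinder v, (Q ^ (gromov (FreeGroup.toWord γ) ξ.1) : ℝ) ∂μ)
      ≤ Q ^ (m - 1) := by
    have hpt : ∀ ξ ∈ cylinder v, (Q ^ (gromov (FreeGroup.toWord γ) ξ.1) : ℝ) ≤ Q ^ (m - 1) :=
      fun ξ hξ => pow_le_pow_right₀ hQ1.le (gromov_le_of_not_prefix hv hnp hξ)
    calc (∫ ξ in cylinder v, (Q ^ (gromov (FreeGroup.toWord γ) ξ.1) : ℝ) ∂μ)
        ≤ ∫ _ξ in cylinder v, Q ^ (m - 1) ∂μ := by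
          apply setIntegral_mono_on ((integrable_Fw μ _).integrableOn)
            (integrableOn_const (measure_lt_top μ _).ne)
            (measurable_prefixSet _) hpt
      _ = (μ (cylinder v)).toReal * Q ^ (m - 1) := by rw [setIntegral_const, smul_eq_mul, measureReal_def]
      _ ≤ 1 * Q ^ (m - 1) := by
          apply mul_le_mul_of_nonneg_right _ (pow_nonneg hQ.le _)
          exact ENNReal.toReal_le_of_le_ofReal one_pos.le (by simpa using prob_le_one)
      _ = Q ^ (m - 1) := one_mul _
  have hden : (0:ℝ) < (n:ℝ) * (Q - 1) / (2 * (r:ℝ)) := by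
    apply div_pos _ h2r
    apply mul_pos _ (by linarith)
    exact_mod_cast hn
  have hdenle : (n:ℝ) * (Q - 1) / (2 * (r:ℝ))
      ≤ 1 + (n:ℝ) * (Q - 1) / (2 * (r:ℝ)) := by linarith
  calc (∫ ξ in cylinder v, (Q ^ (gromov (FreeGroup.toWord γ) ξ.1) : ℝ) ∂μ)
        / (1 + (n:ℝ) * (Q - 1) / (2 * (r:ℝ)))
      ≤ Q ^ (m - 1) / ((n:ℝ) * (Q - 1) / (2 * (r:ℝ))) := by
        apply div_le_div₀ (pow_nonneg hQ.le _) hnum hden hdenle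
    _ = Q ^ (m - 1) * (2 * (r:ℝ)) / ((n:ℝ) * (Q - 1)) := by
        rw [div_div_eq_mul_div]

/-- Lemma: limsup bound for matrix coefficients.
For nontrivial $u, v$:
$\limsup_n (1/|S_n|) Σ_{γ ∈ S_n, u ≼ γ⁻¹} ⟨π(γ)1_B, 1_{B_v}⟩/Ξ(γ) ≤ μ(B_u)μ(B_v)$,
where $⟨π(γ)1_B, 1_{B_v}⟩ = ∫_{B_v} P(γ,ξ)^{1/2} dμ(ξ)$. -/
theorem matrix_coefficient_limsup {r : ℕ} (hr : 2 ≤ r)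
    [BorelSpace (Boundary r)]
    (μ : Measure (Boundary r)) [IsProbabilityMeasure μ]
    (hμ : ∀ u : FreeGroup (Fin r), u ≠ 1 →
      μ (cylinder u) =
        1 / (2 * (r : ℝ≥0∞) * (2 * (r : ℝ≥0∞) - 1) ^ ((FreeGroup.toWord u).length - 1)))
    (u v : FreeGroup (Fin r)) (hu : u ≠ 1) (hv : v ≠ 1) :
    Filter.limsup
      (fun n : ℕ => (1 / ((sphere r n).card : ℝ)) *
        ∑ γ ∈ (sphere r n).filter (fun γ => FreeGroup.toWord u <+: FreeGroup.toWord γ⁻¹),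
          (∫ ξ in cylinder v, Real.sqrt (PK γ ξ) ∂μ) / HC μ γ)
      atTop ≤ (μ (cylinder u)).toReal * (μ (cylinder v)).toReal := by
  classical
  set Q : ℝ := 2 * (r:ℝ) - 1 with hQdef
  have hrR : (2:ℝ) ≤ (r:ℝ) := by exact_mod_cast hr
  have hQ : (0:ℝ) < Q := by rw [hQdef]; linarith
  have hQ1 : (1:ℝ) < Q := by rw [hQdef]; linarith
  have h2r : (0:ℝ) < 2 * (r:ℝ) := by linarith
  set l : ℕ := (FreeGroup.toWord u).length with hldef
  set m : ℕ := (FreeGroup.toWord v).length with hmdef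
  have hune : FreeGroup.toWord u ≠ [] := fun h => hu (FreeGroup.toWord_eq_nil_iff.1 h)
  have hvne : FreeGroup.toWord v ≠ [] := fun h => hv (FreeGroup.toWord_eq_nil_iff.1 h)
  have hl1 : 1 ≤ l := by
    rw [hldef]
    have := List.length_pos_iff.2 hune
    omega
  have hm1 : 1 ≤ m := by
    rw [hmdef]
    have := List.length_pos_iff.2 hvne
    omega
  -- measure values
  have hμu : (μ (cylinder u)).toReal = 1 / (2 * (r:ℝ) * Q ^ (l - 1)) := by
    have := measure_prefixSet_toReal hr μ hμ (reduced_toWord u) hune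
    exact this
  have hμv : (μ (cylinder v)).toReal = 1 / (2 * (r:ℝ) * Q ^ (m - 1)) := by
    have := measure_prefixSet_toReal hr μ hμ (reduced_toWord v) hvne
    exact this
  set M : ℝ := (μ (cylinder u)).toReal * (μ (cylinder v)).toReal with hMdef
  -- the dominating sequence
  set C1 : ℝ := Q / (2 * (r:ℝ))^2 with hC1def
  set C2 : ℝ := Q ^ (m - 1) * (2 * (r:ℝ)) / (Q - 1) with hC2def
  set g : ℕ → ℝ := fun n => M + (C1 * (1/Q)^(n-1) + C2 * (1/(n:ℝ))) with hgdef
  set f : ℕ → ℝ := fun n : ℕ => (1 / ((sphere r n).card : ℝ)) *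
        ∑ γ ∈ (sphere r n).filter (fun γ => FreeGroup.toWord u <+: FreeGroup.toWord γ⁻¹),
          (∫ ξ in cylinder v, Real.sqrt (PK γ ξ) ∂μ) / HC μ γ with hfdef
  -- eventual bound
  have hev : ∀ᶠ n in atTop, f n ≤ g n := by
    rw [eventually_atTop]
    refine ⟨m + l + 1, fun n hn => ?_⟩
    have hn1 : 1 ≤ n := by omega
    set k : ℕ := n - m - l with hkdef
    have hk1 : 1 ≤ k := by omega
    -- sphere cardinality
    have hcardS : (sphere r n).card = 2 * r * (2 * r - 1) ^ (n - 1) := by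
      obtain ⟨k', rfl⟩ : ∃ k', n = k' + 1 := ⟨n - 1, by omega⟩
      rw [sphere_card, RW_card]
      norm_num
    have hQcast : ((2 * r - 1 : ℕ) : ℝ) = Q := by
      rw [Nat.cast_sub (by omega), hQdef]
      push_cast
      ring
    have hScast : (((sphere r n).card : ℕ) : ℝ) = 2 * (r:ℝ) * Q ^ (n - 1) := by
      rw [hcardS]
      push_cast [Nat.cast_sub (show 1 ≤ 2 * r by omega)]
      ring
    have hSpos : (0:ℝ) < (((sphere r n).card : ℕ) : ℝ) := by
      rw [hScast]; exact mul_pos h2r (pow_pos hQ _)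
    set A := (sphere r n).filter
      (fun γ => FreeGroup.toWord u <+: FreeGroup.toWord γ⁻¹) with hAdef
    set t : FreeGroup (Fin r) → ℝ :=
      fun γ => (∫ ξ in cylinder v, Real.sqrt (PK γ ξ) ∂μ) / HC μ γ with htdef
    set P : FreeGroup (Fin r) → Prop := fun γ => FreeGroup.toWord v <+: FreeGroup.toWord γ
      with hPdef
    -- the glue count
    have hfilter_eq : A.filter P = (sphere r n).filter
        (fun γ => FreeGroup.toWord v <+: FreeGroup.toWord γ ∧
          FreeGroup.invRev (FreeGroup.toWord u) <:+ FreeGroup.toWord γ) := by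
      rw [hAdef, Finset.filter_filter]
      apply Finset.filter_congr
      intro γ _
      rw [hPdef]
      simp only [FreeGroup.toWord_inv]
      rw [prefix_invRev_iff]
      tauto
    have hcardP : (A.filter P).card = ((RW r n).filter
        (fun w => FreeGroup.toWord v <+: w ∧
          FreeGroup.invRev (FreeGroup.toWord u) <:+ w)).card := by
      rw [hfilter_eq]
      exact sphere_filter_card n (fun w => FreeGroup.toWord v <+: w ∧
        FreeGroup.invRev (FreeGroup.toWord u) <:+ w)
    have hglue : 2 * r * (A.filter P).card ≤ (2 * r - 1) ^ (k + 1) + (2 * r - 1) := by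
      rw [hcardP]
      have hsu : FreeGroup.invRev (FreeGroup.toWord u) ≠ [] := by
        intro h
        have h2 := congrArg List.length h
        rw [FreeGroup.invRev_length, List.length_nil] at h2
        exact hune (List.length_eq_zero_iff.1 h2)
      have := glue_bound hr hvne hsu n
        (by rw [FreeGroup.invRev_length]; omega)
      rw [FreeGroup.invRev_length] at this
      have hexp : n - (FreeGroup.toWord v).length - (FreeGroup.toWord u).length + 1 = k + 1 := by
        omega
      rwa [hexp] at this
    have hglueR : 2 * (r:ℝ) * ((A.filter P).card : ℝ) ≤ Q ^ (k + 1) + Q := by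
      have hc : ((2 * r * (A.filter P).card : ℕ) : ℝ)
          ≤ (((2 * r - 1) ^ (k + 1) + (2 * r - 1) : ℕ) : ℝ) := Nat.cast_le.2 hglue
      calc 2 * (r:ℝ) * ((A.filter P).card : ℝ)
          = ((2 * r * (A.filter P).card : ℕ) : ℝ) := by push_cast; ring
        _ ≤ (((2 * r - 1) ^ (k + 1) + (2 * r - 1) : ℕ) : ℝ) := hc
        _ = Q ^ (k + 1) + Q := by rw [Nat.cast_add, Nat.cast_pow, hQcast]
    have hC2nonneg : 0 ≤ C2 := by
      rw [hC2def]
      apply div_nonneg (mul_nonneg (pow_nonneg hQ.le _) h2r.le) (by linarith)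
    -- term bounds
    have hb1 : ∑ γ ∈ A.filter P, t γ ≤ ((A.filter P).card : ℝ) := by
      calc ∑ γ ∈ A.filter P, t γ ≤ ∑ _γ ∈ A.filter P, (1:ℝ) :=
            Finset.sum_le_sum (fun γ _ => term_le_one hr μ v γ)
        _ = ((A.filter P).card : ℝ) := by rw [Finset.sum_const, nsmul_eq_mul, mul_one]
    have hb2 : ∑ γ ∈ A.filter (fun γ => ¬ P γ), t γ
        ≤ (((sphere r n).card : ℕ) : ℝ) * (C2 * (1/(n:ℝ))) := by
      have hbd : ∀ γ ∈ A.filter (fun γ => ¬ P γ), t γ ≤ C2 * (1/(n:ℝ)) := by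
        intro γ hγ
        simp only [Finset.mem_filter, hAdef] at hγ
        obtain ⟨⟨hγs, -⟩, hnp⟩ := hγ
        have hγlen : (FreeGroup.toWord γ).length = n := mem_sphere.1 hγs
        have := term_le_eps hr μ hμ v γ hvne hnp (by omega)
        rw [hγlen] at this
        refine le_trans this (le_of_eq ?_)
        rw [hC2def]
        have hne1 : (n:ℝ) ≠ 0 := Nat.cast_ne_zero.2 (by omega)
        have hne2 : Q - 1 ≠ 0 := by intro h; rw [sub_eq_zero] at h; exact absurd h.symm hQ1.ne
        rw [hQdef] at hne2
        rw [hQdef, hmdef]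
        field_simp
      calc ∑ γ ∈ A.filter (fun γ => ¬ P γ), t γ
          ≤ ∑ _γ ∈ A.filter (fun γ => ¬ P γ), (C2 * (1/(n:ℝ))) :=
            Finset.sum_le_sum hbd
        _ = ((A.filter (fun γ => ¬ P γ)).card : ℝ) * (C2 * (1/(n:ℝ))) := by
            rw [Finset.sum_const, nsmul_eq_mul]
        _ ≤ (((sphere r n).card : ℕ) : ℝ) * (C2 * (1/(n:ℝ))) := by
            apply mul_le_mul_of_nonneg_right _ (mul_nonneg hC2nonneg (by positivity))
            have : (A.filter (fun γ => ¬ P γ)).card ≤ (sphere r n).card :=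
              Finset.card_le_card (le_trans (Finset.filter_subset _ _)
                (Finset.filter_subset _ _))
            exact_mod_cast this
    -- total
    have hsum : ∑ γ ∈ A, t γ ≤ ((A.filter P).card : ℝ)
        + (((sphere r n).card : ℕ) : ℝ) * (C2 * (1/(n:ℝ))) := by
      rw [← Finset.sum_filter_add_sum_filter_not A P t]
      exact add_le_add hb1 hb2
    have hfn : f n ≤ ((A.filter P).card : ℝ) / (((sphere r n).card : ℕ) : ℝ)
        + C2 * (1/(n:ℝ)) := by
      have hfeq : f n = (1 / (((sphere r n).card : ℕ) : ℝ)) * ∑ γ ∈ A, t γ := rfl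
      rw [hfeq]
      calc (1 / (((sphere r n).card : ℕ) : ℝ)) * ∑ γ ∈ A, t γ
          ≤ (1 / (((sphere r n).card : ℕ) : ℝ)) * (((A.filter P).card : ℝ)
            + (((sphere r n).card : ℕ) : ℝ) * (C2 * (1/(n:ℝ)))) := by
            apply mul_le_mul_of_nonneg_left hsum (by positivity)
        _ = ((A.filter P).card : ℝ) / (((sphere r n).card : ℕ) : ℝ) + C2 * (1/(n:ℝ)) := by
            field_simp
    -- main count estimate
    have hM : M = 1/(2 * (r:ℝ) * Q^(l-1)) * (1/(2 * (r:ℝ) * Q^(m-1))) := by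
      rw [hMdef, hμu, hμv]
    have hpow : Q ^ (n-1) = Q ^ (k+1) * (Q ^ (m-1) * Q ^ (l-1)) := by
      rw [← pow_add, ← pow_add]
      congr 1
      omega
    have hratio : ((A.filter P).card : ℝ) / (((sphere r n).card : ℕ) : ℝ)
        ≤ M + C1 * (1/Q)^(n-1) := by
      have h2rne : (2 * (r:ℝ)) ≠ 0 := by positivity
      have heq1 : ((A.filter P).card : ℝ) / (((sphere r n).card : ℕ) : ℝ)
          = (2 * (r:ℝ) * ((A.filter P).card : ℝ)) /
            (2 * (r:ℝ) * (((sphere r n).card : ℕ) : ℝ)) := by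
        rw [mul_div_mul_left _ _ h2rne]
      rw [heq1]
      have hposden : (0:ℝ) < 2 * (r:ℝ) * (((sphere r n).card : ℕ) : ℝ) := mul_pos h2r hSpos
      calc (2 * (r:ℝ) * ((A.filter P).card : ℝ)) /
            (2 * (r:ℝ) * (((sphere r n).card : ℕ) : ℝ))
          ≤ (Q ^ (k+1) + Q) / (2 * (r:ℝ) * (((sphere r n).card : ℕ) : ℝ)) :=
            (div_le_div_iff_of_pos_right hposden).2 hglueR
        _ = M + C1 * (1/Q)^(n-1) := by
            rw [hScast, hM, hC1def, one_div_pow, hpow]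
            have hQne : Q ≠ 0 := hQ.ne'
            field_simp
    calc f n ≤ ((A.filter P).card : ℝ) / (((sphere r n).card : ℕ) : ℝ) + C2 * (1/(n:ℝ)) := hfn
      _ ≤ (M + C1 * (1/Q)^(n-1)) + C2 * (1/(n:ℝ)) := by
          apply add_le_add_left hratio
      _ = g n := by rw [hgdef]; ring
  -- tendsto
  have hg0 : Tendsto g atTop (nhds M) := by
    have h1 : Tendsto (fun n : ℕ => (1/Q)^(n-1)) atTop (nhds 0) := by
      have hbase : Tendsto (fun k : ℕ => (1/Q)^k) atTop (nhds 0) :=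
        tendsto_pow_atTop_nhds_zero_of_lt_one (by positivity) (by
          rw [div_lt_one hQ]; linarith)
      exact hbase.comp (tendsto_sub_atTop_nat 1)
    have h2 : Tendsto (fun n : ℕ => (1/(n:ℝ))) atTop (nhds 0) := by
      exact tendsto_one_div_atTop_nhds_zero_nat
    have : Tendsto (fun n : ℕ => M + (C1 * (1/Q)^(n-1) + C2 * (1/(n:ℝ)))) atTop
        (nhds (M + (C1 * 0 + C2 * 0))) :=
      tendsto_const_nhds.add ((tendsto_const_nhds.mul h1).add (tendsto_const_nhds.mul h2))
    rw [hgdef]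
    simpa only [mul_zero, add_zero, zero_add] using this
  have hfnonneg : ∀ n, 0 ≤ f n := by
    intro n
    apply mul_nonneg (by positivity)
    exact Finset.sum_nonneg (fun γ _ => term_nonneg μ v γ)
  have hcob : IsCoboundedUnder (· ≤ ·) atTop f :=
    IsCoboundedUnder.of_frequently_ge (Frequently.of_forall (fun n => hfnonneg n))
  have hbdd : IsBoundedUnder (· ≤ ·) atTop g := hg0.isBoundedUnder_le
  have hls := limsup_le_limsup hev hcob hbdd
  rwa [hg0.limsup_eq] at hls


end ArxivFree
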